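/- Let a ∈ ℝ, b ≠ 0, t > 0, ω with ω/(|b|t) ≥ max{1, 10⁴·(a/(2b))²}, ε² = ω/(|b|t), and suppose ξ is 'far': (ξ + a/(2b))² > 100·ω/(|b|t) + (a/(2b))². Then, writing ξ_{a,b} = ξ + a/(2b), for all θ ∈ [0, π] one has 2(ξ_{a,b} + (3/2)ε cos θ)² + (ξ_{a,b} − a/(2b))² + (a/(2b) − ε cos θ)² − 3(a/(2b))² − (3/2)ε² cos²θ − ε² > 3·ω/(|b|t). -/
import Mathlib
set_option maxHeartbeats 1000000


theorem stmt11 (a b t ω ε ξ : ℝ) (hb : b ≠ 0) (ht : 0 < t)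
    (hbig : max 1 (10^4 * (a / (2*b))^2) ≤ ω / (|b| * t))
    (hε : 0 ≤ ε) (hε2 : ε^2 = ω / (|b| * t))
    (hfar : (ξ + a / (2*b))^2 > 100 * (ω / (|b| * t)) + (a / (2*b))^2)
    (θ : ℝ) (hθ : θ ∈ Set.Icc 0 Real.pi) :
    2 * ((ξ + a/(2*b)) + (3/2) * ε * Real.cos θ)^2
      + ((ξ + a/(2*b)) - a/(2*b))^2
      + (a/(2*b) - ε * Real.cos θ)^2
      - 3 * (a/(2*b))^2
      - (3/2) * ε^2 * (Real.cos θ)^2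
      - ε^2 > 3 * (ω / (|b| * t)) := by
  set c := a / (2*b) with hc
  set s := Real.cos θ with hs
  have hs1 : -1 ≤ s := Real.neg_one_le_cos θ
  have hs2 : s ≤ 1 := Real.cos_le_one θ
  have h1 : (1:ℝ) ≤ ω / (|b| * t) := le_trans (le_max_left _ _) hbig
  have h2 : 10^4 * c^2 ≤ ω / (|b| * t) := le_trans (le_max_right _ _) hbig
  rw [← hε2] at h1 h2 hfar ⊢
  have hε1 : 1 ≤ ε := by nlinarith
  set u : ℝ := |ξ + c| with hu
  set d : ℝ := |c| with hd
  have hu0 : 0 ≤ u := abs_nonneg _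
  have hd0 : 0 ≤ d := abs_nonneg _
  have hu2 : u^2 = (ξ + c)^2 := sq_abs _
  have hd2 : d^2 = c^2 := sq_abs _
  have hugt : 10*ε < u := by nlinarith
  have hdle : 100*d ≤ ε := by nlinarith
  have b1 : -u ≤ (ξ + c) * s := by
    have : |(ξ + c) * s| ≤ u := by
      rw [abs_mul]
      calc u * |s| ≤ u * 1 := by
            apply mul_le_mul_of_nonneg_left _ hu0
            exact abs_le.2 ⟨hs1, hs2⟩
        _ = u := mul_one u
    linarith [neg_abs_le ((ξ + c) * s)]
  have b2 : (ξ + c) * c ≤ u * d := by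
    calc (ξ + c) * c ≤ |(ξ + c) * c| := le_abs_self _
      _ = u * d := abs_mul _ _
  have b3 : c * s ≤ d := by
    calc c * s ≤ |c * s| := le_abs_self _
      _ = d * |s| := abs_mul _ _
      _ ≤ d * 1 := mul_le_mul_of_nonneg_left (abs_le.2 ⟨hs1, hs2⟩) hd0
      _ = d := mul_one d
  have key : 3*(ξ+c)^2 + 6*((ξ+c)*s)*ε + 4*(ε*s)^2 - 2*((ξ+c)*c) - 2*(c*s)*ε - c^2 - ε^2
      > 3*ε^2 := by
    have h6 : 6*((ξ+c)*s)*ε ≥ -(6*u*ε) := by nlinarith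
    have h3 : (c*s)*ε ≤ d*ε := by nlinarith
    nlinarith [sq_nonneg (ε*s), mul_pos (sub_pos.2 hugt) (sub_pos.2 hugt),
      mul_nonneg hu0 (sub_nonneg.2 hdle), mul_nonneg hd0 hd0]
  nlinarith [key]
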